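/- Let L be a non-degenerate integral lattice of finite rank d, and let λ be a nonzero element of ℚ ⊗_ℤ L. Then there exist elements α₁, …, α_d ∈ L, linearly independent over ℤ (so that ⊕_{i=1}^d ℤα_i is a rank-d sublattice of L), such that ⟨α_i, α_i⟩ ∉ {0, 2} for all i = 1, …, d, ⟨α_i, α_j⟩ = 0 for every pair of distinct indices i, j ∈ {1, …, d}, and ⟨α_i, λ⟩ ≠ 0 for all i = 1, …, d. -/

import Mathlib

open Polynomial
open scoped TensorProduct

private lemma exists_eval_ne_zero {p : ℚ[X]} (hp : p ≠ 0) : ∃ t : ℚ, p.eval t ≠ 0 := by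
  obtain ⟨t, ht⟩ := Infinite.exists_notMem_finset p.roots.toFinset
  exact ⟨t, fun h => ht (Multiset.mem_toFinset.2 ((Polynomial.mem_roots hp).2 h))⟩

private lemma linear_ne_zero_of_coeff0 {a b : ℚ} (ha : a ≠ 0) : C a + C b * X ≠ 0 := by
  intro h
  have := congrArg (fun p => Polynomial.coeff p 0) h
  simp at this
  exact ha this

private lemma quad_ne_zero_of_coeff0 {a b c : ℚ} (ha : a ≠ 0) : C a + C b * X + C c * X ^ 2 ≠ 0 := by
  intro h
  have := congrArg (fun p => Polynomial.coeff p 0) h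
  simp at this
  exact ha this

private lemma linear_ne_zero_of_coeff1 {a b : ℚ} (hb : b ≠ 0) : C a + C b * X ≠ 0 := by
  intro h
  have := congrArg (fun p => Polynomial.coeff p 1) h
  simp at this
  exact hb this

private lemma exists_good_vec {V : Type*} [AddCommGroup V] [Module ℚ V]
    (B : LinearMap.BilinForm ℚ V) (hs : B.IsSymm) (hnd : B.Nondegenerate)
    (f : V →ₗ[ℚ] ℚ) (hf : f ≠ 0) : ∃ v : V, B v v ≠ 0 ∧ f v ≠ 0 := by
  obtain ⟨w, hw⟩ : ∃ w, f w ≠ 0 := by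
    by_contra h
    push_neg at h
    exact hf (LinearMap.ext fun x => by simpa using h x)
  by_cases hww : B w w ≠ 0
  · exact ⟨w, hww, hw⟩
  push_neg at hww
  have hB : B ≠ 0 := by
    intro h
    have hw0 : w = 0 := hnd.1 w (fun y => by rw [h]; rfl)
    exact hw (by simp [hw0])
  haveI : Invertible (2 : ℚ) := invertibleOfNonzero two_ne_zero
  obtain ⟨u, hu⟩ := LinearMap.BilinForm.exists_bilinForm_self_ne_zero hB (LinearMap.BilinForm.isSymm_iff.1 hs)
  set q1 : ℚ[X] := C (2 * B w u) + C (B u u) * X with hq1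
  set q2 : ℚ[X] := C (f w) + C (f u) * X with hq2
  have hq1ne : q1 ≠ 0 := linear_ne_zero_of_coeff1 hu
  have hq2ne : q2 ≠ 0 := linear_ne_zero_of_coeff0 hw
  obtain ⟨t, ht⟩ := exists_eval_ne_zero (mul_ne_zero (mul_ne_zero X_ne_zero hq1ne) hq2ne)
  simp only [eval_mul, eval_add, eval_C, eval_X, mul_ne_zero_iff, hq1, hq2] at ht
  obtain ⟨⟨ht0, ht1⟩, ht2⟩ := ht
  refine ⟨w + t • u, ?_, by simpa [mul_comm] using ht2⟩
  have huw : B u w = B w u := (hs.eq w u).symm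
  have : B (w + t • u) (w + t • u) = t * (2 * B w u + B u u * t) := by
    simp [LinearMap.BilinForm.add_left, LinearMap.BilinForm.add_right, hww, huw]
    ring
  rw [this]
  exact mul_ne_zero ht0 ht1

private lemma exists_good_vec' {V : Type*} [AddCommGroup V] [Module ℚ V] [FiniteDimensional ℚ V]
    (B : LinearMap.BilinForm ℚ V) (hs : B.IsSymm) (hnd : B.Nondegenerate)
    (f : V →ₗ[ℚ] ℚ) (hf : f ≠ 0) (hdim : 2 ≤ Module.finrank ℚ V) :
    ∃ v : V, B v v ≠ 0 ∧ f v ≠ 0 ∧ ∃ w ∈ B.orthogonal (ℚ ∙ v), f w ≠ 0 := by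
  classical
  set lam : V := (B.toDual hnd).symm f with hlamdef
  have hlam : ∀ x, B lam x = f x := by
    intro x
    have : B.toDual hnd lam = f := (B.toDual hnd).apply_symm_apply f
    rw [← this, LinearMap.BilinForm.toDual_def]
  have hlamne : lam ≠ 0 := by
    intro h
    apply hf
    ext x
    rw [← hlam x, h]
    simp
  -- main claim
  have claim : ∀ v : V, B v v ≠ 0 → f v ≠ 0 → v ∉ (ℚ ∙ lam) →
      ∃ w ∈ B.orthogonal (ℚ ∙ v), f w ≠ 0 := by
    intro v hv hfv hvs
    by_contra hcon
    push_neg at hcon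
    have hvo : ¬ B.IsOrtho v v := hv
    set c : ℚ := B lam v / B v v with hc
    have hmu : lam - c • v = 0 := by
      apply hnd.1
      intro x
      have hx : x ∈ (ℚ ∙ v) ⊔ B.orthogonal (ℚ ∙ v) := by
        rw [LinearMap.BilinForm.span_singleton_sup_orthogonal_eq_top hvo]
        exact Submodule.mem_top
      obtain ⟨y, hy, z, hz, rfl⟩ := Submodule.mem_sup.1 hx
      obtain ⟨a, rfl⟩ := Submodule.mem_span_singleton.1 hy
      have hvz : B v z = 0 := (LinearMap.BilinForm.mem_orthogonal_iff.1 hz) v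
        (Submodule.mem_span_singleton_self v)
      have hlamz : B lam z = 0 := by rw [hlam]; exact hcon z hz
      have expand : B (lam - c • v) (a • v + z) = a * (B lam v - c * B v v) := by
        simp only [map_sub, map_smul, LinearMap.sub_apply, LinearMap.smul_apply, map_add,
          smul_eq_mul, hvz, hlamz]
        ring
      rw [expand, hc, div_mul_cancel₀ _ hv, sub_self, mul_zero]
    have hcne : c ≠ 0 := by
      rw [hc, div_ne_zero_iff]
      rw [hlam] at *
      exact ⟨hfv, hv⟩
    apply hvs
    rw [Submodule.mem_span_singleton]
    refine ⟨c⁻¹, ?_⟩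
    have : lam = c • v := by rwa [sub_eq_zero] at hmu
    rw [this, smul_smul, inv_mul_cancel₀ hcne, one_smul]
  obtain ⟨v₀, hv₀, hfv₀⟩ := exists_good_vec B hs hnd f hf
  have hv₀ne : v₀ ≠ 0 := by rintro rfl; simp at hv₀
  by_cases hmem : v₀ ∈ (ℚ ∙ lam)
  · -- span lam = span v₀; perturb
    obtain ⟨a, ha⟩ := Submodule.mem_span_singleton.1 hmem
    have hane : a ≠ 0 := by rintro rfl; simp at ha; exact hv₀ne ha.symm
    have hspan : (ℚ ∙ lam) ≤ (ℚ ∙ v₀) := by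
      rw [Submodule.span_singleton_le_iff_mem, Submodule.mem_span_singleton]
      exact ⟨a⁻¹, by rw [← ha, smul_smul, inv_mul_cancel₀ hane, one_smul]⟩
    obtain ⟨u, hu⟩ : ∃ u, u ∉ (ℚ ∙ v₀) := by
      by_contra h
      push_neg at h
      have : (ℚ ∙ v₀) = ⊤ := Submodule.eq_top_iff'.2 h
      have h1 : Module.finrank ℚ V = 1 := by
        rw [← finrank_top ℚ V, ← this, finrank_span_singleton hv₀ne]
      omega
    set q1 : Polynomial ℚ := Polynomial.C (B v₀ v₀) + Polynomial.C (2 * B v₀ u) * Polynomial.X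
      + Polynomial.C (B u u) * Polynomial.X ^ 2 with hq1def
    set q2 : Polynomial ℚ := Polynomial.C (f v₀) + Polynomial.C (f u) * Polynomial.X with hq2def
    have hq1ne : q1 ≠ 0 := quad_ne_zero_of_coeff0 hv₀
    have hq2ne : q2 ≠ 0 := linear_ne_zero_of_coeff0 hfv₀
    obtain ⟨t, ht⟩ := exists_eval_ne_zero
      (mul_ne_zero (mul_ne_zero Polynomial.X_ne_zero hq1ne) hq2ne)
    simp only [Polynomial.eval_mul, Polynomial.eval_add, Polynomial.eval_C, Polynomial.eval_X,
      Polynomial.eval_pow, mul_ne_zero_iff, hq1def, hq2def] at ht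
    obtain ⟨⟨ht0, ht1⟩, ht2⟩ := ht
    set v : V := v₀ + t • u with hvdef
    have hBv : B v v ≠ 0 := by
      have huv : B u v₀ = B v₀ u := (hs.eq v₀ u).symm
      have : B v v = B v₀ v₀ + 2 * B v₀ u * t + B u u * t ^ 2 := by
        simp [hvdef, huv]
        ring
      rw [this]
      exact ht1
    have hfvne : f v ≠ 0 := by
      have : f v = f v₀ + f u * t := by simp [hvdef]; ring
      rw [this]
      exact ht2
    have hvnot : v ∉ (ℚ ∙ lam) := by
      intro hmem2
      obtain ⟨b, hb⟩ := Submodule.mem_span_singleton.1 (hspan hmem2)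
      apply hu
      rw [Submodule.mem_span_singleton]
      refine ⟨t⁻¹ * (b - 1), ?_⟩
      have h2 : t • u = (b - 1) • v₀ := by
        rw [sub_smul, one_smul, hb, hvdef]
        abel
      rw [mul_smul, ← h2, smul_smul, inv_mul_cancel₀ ht0, one_smul]
    exact ⟨v, hBv, hfvne, claim v hBv hfvne hvnot⟩
  · exact ⟨v₀, hv₀, hfv₀, claim v₀ hv₀ hfv₀ hmem⟩

private lemma key (d : ℕ) : ∀ (V : Type u) [AddCommGroup V] [Module ℚ V] [FiniteDimensional ℚ V],
    Module.finrank ℚ V = d → ∀ (B : LinearMap.BilinForm ℚ V), B.IsSymm → B.Nondegenerate →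
    ∀ f : V →ₗ[ℚ] ℚ, (d ≠ 0 → f ≠ 0) →
    ∃ v : Fin d → V, LinearIndependent ℚ v ∧ (∀ i, B (v i) (v i) ≠ 0) ∧
      (∀ i j, i ≠ j → B (v i) (v j) = 0) ∧ (∀ i, f (v i) ≠ 0) := by
  induction d with
  | zero =>
    intro V _ _ _ _ B _ _ f _
    exact ⟨Fin.elim0, linearIndependent_empty_type, fun i => i.elim0, fun i => i.elim0,
      fun i => i.elim0⟩
  | succ d ih =>
    intro V _ _ _ hrank B hs hnd f hf
    have hf' : f ≠ 0 := hf (Nat.succ_ne_zero d)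
    obtain ⟨v₁, h1, h2, h3⟩ :
        ∃ v₁, B v₁ v₁ ≠ 0 ∧ f v₁ ≠ 0 ∧ (d ≠ 0 → ∃ w ∈ B.orthogonal (ℚ ∙ v₁), f w ≠ 0) := by
      rcases Nat.eq_zero_or_pos d with hd | hd
      · obtain ⟨v₁, hA, hB'⟩ := exists_good_vec B hs hnd f hf'
        exact ⟨v₁, hA, hB', fun h => absurd hd h⟩
      · obtain ⟨v₁, hA, hB', hC⟩ := exists_good_vec' B hs hnd f hf' (by omega)
        exact ⟨v₁, hA, hB', fun _ => hC⟩
    have hvo : ¬ B.IsOrtho v₁ v₁ := h1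
    set W := B.orthogonal (ℚ ∙ v₁) with hWdef
    have hrefl : B.IsRefl := hs.isRefl
    have hcompl : IsCompl (ℚ ∙ v₁) W :=
      LinearMap.BilinForm.isCompl_span_singleton_orthogonal hvo
    have hv₁ne : v₁ ≠ 0 := by rintro rfl; simp at h1
    have hrankW : Module.finrank ℚ W = d := by
      have h := Submodule.finrank_add_eq_of_isCompl hcompl
      rw [finrank_span_singleton hv₁ne, hrank] at h
      omega
    have hs' : (B.restrict W).IsSymm := ⟨fun x y => hs.eq x y⟩
    have hnd' : (B.restrict W).Nondegenerate :=
      LinearMap.BilinForm.restrict_nondegenerate_orthogonal_spanSingleton B hnd hrefl hvo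
    have hf'' : d ≠ 0 → f.comp W.subtype ≠ 0 := by
      intro hd h0
      obtain ⟨w, hw, hfw⟩ := h3 hd
      exact hfw (by have := congrArg (fun g => g ⟨w, hw⟩) h0; simpa using this)
    obtain ⟨w, hli, hdiag, horth, hfvals⟩ := ih W hrankW (B.restrict W) hs' hnd'
      (f.comp W.subtype) hf''
    have hmemW : ∀ i, B v₁ ((w i : V)) = 0 := fun i =>
      (LinearMap.BilinForm.mem_orthogonal_iff.1 (w i).2) v₁ (Submodule.mem_span_singleton_self v₁)
    refine ⟨Fin.cons v₁ (fun i => (w i : V)), ?_, ?_, ?_, ?_⟩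
    · rw [linearIndependent_fin_cons]
      refine ⟨hli.map' W.subtype W.ker_subtype, ?_⟩
      intro hmem
      have hsub : Submodule.span ℚ (Set.range fun i => ((w i : V))) ≤ W := by
        rw [Submodule.span_le]
        rintro _ ⟨i, rfl⟩
        exact (w i).2
      have hmem2 : v₁ ∈ W := hsub hmem
      exact h1 ((LinearMap.BilinForm.mem_orthogonal_iff.1 hmem2) v₁
        (Submodule.mem_span_singleton_self v₁))
    · refine Fin.cases ?_ ?_
      · simpa using h1
      · intro i
        simpa using hdiag i
    · refine Fin.cases ?_ ?_
      · refine Fin.cases ?_ ?_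
        · intro h; exact absurd rfl h
        · intro j _
          simpa using hmemW j
      · intro i
        refine Fin.cases ?_ ?_
        · intro _
          simpa using hrefl _ _ (hmemW i)
        · intro j hij
          have hij' : i ≠ j := fun h => hij (by rw [h])
          simpa using horth i j hij'
    · refine Fin.cases ?_ ?_
      · simpa using h2
      · intro i
        simpa using hfvals i

private lemma tmul_zsmul' {L : Type*} [AddCommGroup L] [Module ℤ L] (k : ℤ) (x : L) :
    (1:ℚ) ⊗ₜ[ℤ] (k • x) = (k:ℚ) • ((1:ℚ) ⊗ₜ[ℤ] x) := by
  rw [← Int.cast_smul_eq_zsmul ℤ k x, Int.cast_id, ← TensorProduct.mk_apply, LinearMap.map_smul,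
    TensorProduct.mk_apply, Int.cast_smul_eq_zsmul ℚ k ((1:ℚ) ⊗ₜ[ℤ] x)]

private lemma exists_int_smul_eq_tmul {L : Type*} [AddCommGroup L] [Module ℤ L]
    (z : ℚ ⊗[ℤ] L) : ∃ (n : ℤ) (x : L), n ≠ 0 ∧ (n : ℚ) • z = (1 : ℚ) ⊗ₜ[ℤ] x := by
  induction z using TensorProduct.induction_on with
  | zero => exact ⟨1, 0, one_ne_zero, by simp⟩
  | tmul q x =>
    refine ⟨(q.den : ℤ), q.num • x, by exact_mod_cast q.den_nz, ?_⟩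
    rw [tmul_zsmul', TensorProduct.smul_tmul', TensorProduct.smul_tmul', smul_eq_mul,
      smul_eq_mul, mul_one]
    congr 1
    have hd : ((q.den : ℚ)) ≠ 0 := by exact_mod_cast q.den_nz
    rw [mul_comm]
    push_cast
    exact ((div_eq_iff hd).1 (Rat.num_div_den q)).symm
  | add z₁ z₂ ih₁ ih₂ =>
    obtain ⟨n, x, hn, hx⟩ := ih₁
    obtain ⟨m, y, hm, hy⟩ := ih₂
    refine ⟨n * m, m • x + n • y, mul_ne_zero hn hm, ?_⟩
    rw [TensorProduct.tmul_add, tmul_zsmul', tmul_zsmul', ← hx, ← hy]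
    push_cast
    module

theorem nondegenerate_integral_lattice_orthogonal_basis_pairing_nonzero
    (d : ℕ) (L : Type*) [AddCommGroup L] [Module ℤ L]
    [Module.Free ℤ L] [Module.Finite ℤ L] (hrank : Module.finrank ℤ L = d)
    (B : LinearMap.BilinForm ℤ L) (hsymm : ∀ x y : L, B x y = B y x)
    (hnondeg : ∀ x : L, (∀ y : L, B x y = 0) → x = 0)
    (lam : ℚ ⊗[ℤ] L) (hlam : lam ≠ 0) :
    ∃ α : Fin d → L, LinearIndependent ℤ α ∧
      (∀ i, B (α i) (α i) ≠ 0 ∧ B (α i) (α i) ≠ 2) ∧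
      (∀ i j, i ≠ j → B (α i) (α j) = 0) ∧
      (∀ i, (B.baseChange ℚ) ((1 : ℚ) ⊗ₜ[ℤ] α i) lam ≠ 0) := by
  classical
  set B' := B.baseChange ℚ with hB'def
  have hcast : ∀ x y : L, B' ((1:ℚ) ⊗ₜ[ℤ] x) ((1:ℚ) ⊗ₜ[ℤ] y) = ((B x y : ℤ) : ℚ) := by
    intro x y
    rw [hB'def, LinearMap.BilinForm.baseChange_tmul]
    simp
  have hBsymm : B.IsSymm := ⟨fun x y => hsymm x y⟩
  have hsymm' : B'.IsSymm := LinearMap.BilinForm.isSymm_iff.2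
    (LinearMap.BilinForm.IsSymm.baseChange ℚ (LinearMap.BilinForm.isSymm_iff.1 hBsymm))
  haveI : FiniteDimensional ℚ (ℚ ⊗[ℤ] L) := Module.Finite.base_change ℤ ℚ L
  have hrank' : Module.finrank ℚ (ℚ ⊗[ℤ] L) = d := by
    rw [Module.finrank_baseChange, hrank]
  -- nondegeneracy of the base change
  set ι := Module.Free.ChooseBasisIndex ℤ L with hι
  set b : Module.Basis ι ℤ L := Module.Free.chooseBasis ℤ L with hb
  have hdet : (LinearMap.BilinForm.toMatrix b B).det ≠ 0 :=
    (LinearMap.BilinForm.nondegenerate_iff_det_ne_zero b).1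
      ⟨hnondeg, fun y h => hnondeg y (fun x => by rw [hsymm]; exact h x)⟩
  have hmat : LinearMap.BilinForm.toMatrix (b.baseChange ℚ) B'
      = (LinearMap.BilinForm.toMatrix b B).map (Int.castRingHom ℚ) := by
    ext i j
    rw [Matrix.map_apply, LinearMap.BilinForm.toMatrix_apply, LinearMap.BilinForm.toMatrix_apply,
      Module.Basis.baseChange_apply, Module.Basis.baseChange_apply, hcast]
    rfl
  have hnd' : B'.Nondegenerate := by
    apply LinearMap.BilinForm.nondegenerate_of_det_ne_zero (b := b.baseChange ℚ)
    rw [hmat, ← RingHom.mapMatrix_apply, ← RingHom.map_det]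
    simpa using hdet
  set f : (ℚ ⊗[ℤ] L) →ₗ[ℚ] ℚ := B'.flip lam with hfdef
  have hfne : f ≠ 0 := by
    intro h0
    apply hlam
    apply hnd'.1
    intro y
    have h1 : B' y lam = 0 := DFunLike.congr_fun h0 y
    rw [← hsymm'.eq y lam]
    simpa using h1
  obtain ⟨v, hli, hdiag, horth, hpair⟩ := key d (ℚ ⊗[ℤ] L) hrank' B' hsymm' hnd' f
    (fun _ => hfne)
  choose n β hn hβ using fun i => exists_int_smul_eq_tmul (v i)
  set α : Fin d → L := fun i => β i + β i with hα
  have htensor : ∀ i, (1:ℚ) ⊗ₜ[ℤ] (α i) = ((2 * n i : ℤ) : ℚ) • v i := by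
    intro i
    rw [hα]
    show (1:ℚ) ⊗ₜ[ℤ] (β i + β i) = _
    rw [TensorProduct.tmul_add, ← hβ i]
    push_cast
    module
  have hcne : ∀ i, ((2 * n i : ℤ) : ℚ) ≠ 0 := by
    intro i
    exact_mod_cast mul_ne_zero two_ne_zero (hn i)
  have hβdiag : ∀ i, B (β i) (β i) ≠ 0 := by
    intro i h0
    have h1 : B' ((1:ℚ) ⊗ₜ[ℤ] β i) ((1:ℚ) ⊗ₜ[ℤ] β i) = 0 := by
      rw [hcast, h0]; norm_num
    rw [← hβ i] at h1
    simp only [map_smul, LinearMap.smul_apply, smul_eq_mul] at h1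
    have hq : ((n i : ℤ) : ℚ) ≠ 0 := by exact_mod_cast hn i
    rcases mul_eq_zero.1 h1 with h | h
    · exact hq h
    rcases mul_eq_zero.1 h with h | h
    · exact hq h
    · exact hdiag i h
  have hαβ : ∀ i, B (α i) (α i) = 4 * B (β i) (β i) := by
    intro i
    rw [hα]
    show B (β i + β i) (β i + β i) = _
    simp only [map_add, LinearMap.add_apply]
    ring
  refine ⟨α, ?_, ?_, ?_, ?_⟩
  · -- linear independence
    have hli2 : LinearIndependent ℚ (fun i => (1:ℚ) ⊗ₜ[ℤ] (α i)) := by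
      have h := hli.units_smul (fun i => Units.mk0 _ (hcne i))
      have he : (fun i => (1:ℚ) ⊗ₜ[ℤ] (α i)) = (fun i => Units.mk0 _ (hcne i)) • v := by
        funext i
        rw [htensor i]
        rfl
      rwa [he]
    have hliZ : LinearIndependent ℤ (fun i => (1:ℚ) ⊗ₜ[ℤ] (α i)) := by
      apply hli2.restrict_scalars
      intro a c h
      have h' : a • (1:ℚ) = c • (1:ℚ) := h
      rwa [zsmul_eq_mul, zsmul_eq_mul, mul_one, mul_one, Int.cast_inj] at h'
    exact LinearIndependent.of_comp ((TensorProduct.mk ℤ ℚ L) 1) hliZ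
  · intro i
    rw [hαβ i]
    have := hβdiag i
    constructor
    · intro h; omega
    · intro h; omega
  · intro i j hij
    have h0 : ((B (α i) (α j) : ℤ) : ℚ) = 0 := by
      rw [← hcast, htensor i, htensor j]
      simp only [map_smul, LinearMap.smul_apply, smul_eq_mul, horth i j hij]
      ring
    exact_mod_cast h0
  · intro i
    show B' ((1:ℚ) ⊗ₜ[ℤ] α i) lam ≠ 0
    rw [htensor i]
    simp only [map_smul, LinearMap.smul_apply, smul_eq_mul]
    refine mul_ne_zero (hcne i) ?_
    have := hpair i
    rw [hfdef] at this
    simpa using this
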